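/- Let r ≥ 2 be an integer and let s, m1, ..., ms be positive integers with s ≤ r, m1 ≥ m2 ≥ ... ≥ ms, m1 ≥ 2, and either s ≥ 3, or (s = 2 and (m1, m2) ≠ (2,2)), or s = 1. Suppose L2 > 0 and LC > 0 are reals with (LC)^2 ≥ L2·(m1^2 + ... + ms^2 − ms). If additionally s·(s+3)/(s+2)·(m1^2 + ... + ms^2 − ms) ≥ (m1 + ... + ms)^2 holds, then LC/(m1 + ... + ms) ≥ sqrt((s+2)/(s(s+3)))·sqrt(L2) ≥ sqrt((r+2)/(r+3))·sqrt(L2/r). -/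
import Mathlib


theorem stmt_19 (r s : ℕ) (hr : 2 ≤ r) (hs : 1 ≤ s) (hsr : s ≤ r)
    (m : ℕ → ℕ) (hmpos : ∀ i, i < s → 0 < m i)
    (hmono : ∀ i j, i ≤ j → j < s → m j ≤ m i)
    (hm1 : 2 ≤ m 0)
    (hcase : 3 ≤ s ∨ (s = 2 ∧ ¬(m 0 = 2 ∧ m 1 = 2)) ∨ s = 1)
    (L2 LC : ℝ) (hL2 : 0 < L2) (hLC : 0 < LC)
    (hodge : LC ^ 2 ≥ L2 * ((∑ i ∈ Finset.range s, (m i : ℝ) ^ 2) - m (s - 1)))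
    (hcomb : (s : ℝ) * (s + 3) / (s + 2) *
        ((∑ i ∈ Finset.range s, (m i : ℝ) ^ 2) - m (s - 1)) ≥
        (∑ i ∈ Finset.range s, (m i : ℝ)) ^ 2) :
    LC / (∑ i ∈ Finset.range s, (m i : ℝ)) ≥
        Real.sqrt ((s + 2) / (s * (s + 3))) * Real.sqrt L2 ∧
      Real.sqrt ((s + 2) / (s * (s + 3))) * Real.sqrt L2 ≥
        Real.sqrt ((r + 2) / (r + 3)) * Real.sqrt (L2 / r) := by
  have hs' : (1:ℝ) ≤ s := by exact_mod_cast hs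
  have hr' : (2:ℝ) ≤ r := by exact_mod_cast hr
  have hsr' : (s:ℝ) ≤ r := by exact_mod_cast hsr
  set A := ∑ i ∈ Finset.range s, (m i : ℝ) with hA
  set Q := (∑ i ∈ Finset.range s, (m i : ℝ) ^ 2) - (m (s - 1) : ℝ) with hQ
  have hApos : 0 < A := by
    apply Finset.sum_pos
    · intro i hi
      exact_mod_cast hmpos i (Finset.mem_range.mp hi)
    · exact Finset.nonempty_range_iff.mpr (by omega)
  have h2 : (0:ℝ) < (s:ℝ) + 2 := by linarith
  have hden : (0:ℝ) < (s:ℝ) * ((s:ℝ) + 3) := by nlinarith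
  have hcomb' : A ^ 2 * ((s:ℝ) + 2) ≤ (s:ℝ) * ((s:ℝ) + 3) * Q := by
    rw [ge_iff_le, div_mul_eq_mul_div, le_div_iff₀ h2] at hcomb
    linarith
  have hQpos : 0 < Q := by
    nlinarith [mul_pos (pow_pos hApos 2) h2]
  have hc : (0:ℝ) ≤ ((s:ℝ) + 2) / ((s:ℝ) * ((s:ℝ) + 3)) := by positivity
  constructor
  · -- first inequality
    rw [← Real.sqrt_mul hc]
    have hkey : ((s:ℝ) + 2) / ((s:ℝ) * ((s:ℝ) + 3)) * L2 ≤ (LC / A) ^ 2 := by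
      rw [div_pow, div_mul_eq_mul_div, div_le_div_iff₀ hden (pow_pos hApos 2)]
      nlinarith [mul_le_mul_of_nonneg_left hcomb' hL2.le,
        mul_le_mul_of_nonneg_left hodge hden.le]
    have := Real.sqrt_le_sqrt hkey
    rwa [Real.sqrt_sq (by positivity : (0:ℝ) ≤ LC / A)] at this
  · -- second inequality
    rw [← Real.sqrt_mul hc, ← Real.sqrt_mul (by positivity : (0:ℝ) ≤ ((r:ℝ)+2)/((r:ℝ)+3))]
    apply Real.sqrt_le_sqrt
    have hrpos : (0:ℝ) < (r:ℝ) := by linarith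
    have hr3 : (0:ℝ) < (r:ℝ) + 3 := by linarith
    have hfrac : ((r:ℝ) + 2) / (((r:ℝ) + 3) * r) ≤ ((s:ℝ) + 2) / ((s:ℝ) * ((s:ℝ) + 3)) := by
      rw [div_le_div_iff₀ (by positivity) hden]
      have h1 : (0:ℝ) ≤ (r:ℝ) - s := by linarith
      nlinarith [mul_nonneg h1 (mul_nonneg (by linarith : (0:ℝ) ≤ (s:ℝ)) hrpos.le),
        mul_nonneg h1 hrpos.le, mul_nonneg h1 (by linarith : (0:ℝ) ≤ (s:ℝ))]
    have : ((r:ℝ) + 2) / ((r:ℝ) + 3) * (L2 / r) = ((r:ℝ) + 2) / (((r:ℝ) + 3) * r) * L2 := by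
      field_simp
    rw [this]
    exact mul_le_mul_of_nonneg_right hfrac hL2.le
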